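/- Let V be a finite vertex type, G a simple graph on V, and T a spanning tree of G. For every edge e of G that is not an edge of T, with endpoints u and v, there exists a closed walk c in G based at u that is a cycle, such that e belongs to the edge set of c and every other edge of c is an edge of T. -/
import Mathlib

/-- For a spanning tree `T` of a simple graph `G`, every edge of `G` not in `T`,
with endpoints `u` and `v`, lies on a cycle in `G` (based at `u`) all of whose other edges
are edges of `T` (the fundamental cycle). -/
theorem stmt_1 {V : Type*} [Fintype V] [DecidableEq V]
    (G T : SimpleGraph V) (hle : T ≤ G) (hT : T.IsTree)
    (u v : V) (hG : G.Adj u v) (hnT : s(u, v) ∉ T.edgeSet) :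
    ∃ c : G.Walk u u, c.IsCycle ∧ s(u, v) ∈ c.edges ∧
      ∀ f ∈ c.edges, f ≠ s(u, v) → f ∈ T.edgeSet := by
  obtain ⟨w⟩ := hT.isConnected v u
  set p := w.toPath.1 with hp
  have hpath : p.IsPath := w.toPath.2
  have hedges : ∀ f ∈ p.edges, f ∈ T.edgeSet := fun f hf => p.edges_subset_edgeSet hf
  have hnot : s(u, v) ∉ p.edges := fun h => hnT (hedges _ h)
  refine ⟨SimpleGraph.Walk.cons hG (p.mapLe hle), ?_, ?_, ?_⟩
  · rw [SimpleGraph.Walk.cons_isCycle_iff]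
    refine ⟨hpath.mapLe hle, ?_⟩
    simpa using hnot
  · simp
  · intro f hf hne
    rw [SimpleGraph.Walk.edges_cons, List.mem_cons] at hf
    rcases hf with hf | hf
    · exact absurd hf hne
    · rw [SimpleGraph.Walk.edges_map] at hf
      simp only [List.mem_map] at hf
      obtain ⟨e, he, rfl⟩ := hf
      simpa using hedges _ he
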